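/- The 1-form ϰ = dx - (λu² + α₀u - λQ(ρ) + λR(ρ)/ρ + α₂/ρ)du + (λuR(ρ)/ρ² - λuQ(ρ)/ρ + ρA²(ρ)(λu+α₀) + α₂u/ρ²)dρ on ℝ³(x,u,ρ) is closed, where Q′(ρ) = ρA²(ρ) and R′(ρ) = Q(ρ), and λ, α₀, α₂ are constants. -/

import Mathlib

/- STATEMENT 12: The 1-form
   ϰ = dx - (λu² + α₀u - λQ(ρ) + λR(ρ)/ρ + α₂/ρ)du
       + (λuR(ρ)/ρ² - λuQ(ρ)/ρ + ρA²(ρ)(λu+α₀) + α₂u/ρ²)dρ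
   on ℝ³ with coordinates (x,u,ρ) (indices 0=x, 1=u, 2=ρ) is closed, where
   Q′(ρ) = ρA²(ρ) and R′(ρ) = Q(ρ). Closedness in coordinates:
   ∂_i c_j = ∂_j c_i for all i, j, where c is the coefficient vector of ϰ. -/

noncomputable def pd3 (i : Fin 3) (f : (Fin 3 → ℝ) → ℝ) (z : Fin 3 → ℝ) : ℝ :=
  deriv (fun s => f (Function.update z i s)) (z i)

/-- Coefficient vector of ϰ at the point z = (x,u,ρ). -/
noncomputable def kappaCoef (A Q R : ℝ → ℝ) (lam a0 a2 : ℝ) (z : Fin 3 → ℝ) :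
    Fin 3 → ℝ :=
  ![1,
    -(lam * (z 1) ^ 2 + a0 * z 1 - lam * Q (z 2) + lam * R (z 2) / z 2 + a2 / z 2),
    lam * z 1 * R (z 2) / (z 2) ^ 2 - lam * z 1 * Q (z 2) / z 2
      + z 2 * (A (z 2)) ^ 2 * (lam * z 1 + a0) + a2 * z 1 / (z 2) ^ 2]

theorem varkappa_closed
    (A Q R : ℝ → ℝ) (hA : ∀ r, 0 < r → 0 < A r)
    (hQ : ∀ r : ℝ, 0 < r → HasDerivAt Q (r * (A r) ^ 2) r)
    (hR : ∀ r : ℝ, 0 < r → HasDerivAt R (Q r) r)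
    (lam a0 a2 : ℝ) :
    ∀ z : Fin 3 → ℝ, 0 < z 2 → ∀ i j : Fin 3,
      pd3 i (fun w => kappaCoef A Q R lam a0 a2 w j) z
        = pd3 j (fun w => kappaCoef A Q R lam a0 a2 w i) z := by
  intro z hz i j
  have hz' : z 2 ≠ 0 := ne_of_gt hz
  have hQ' : HasDerivAt Q (z 2 * (A (z 2)) ^ 2) (z 2) := hQ _ hz
  have hR' : HasDerivAt R (Q (z 2)) (z 2) := hR _ hz
  -- the coefficients as functions
  have h00 : ∀ k : Fin 3, pd3 k (fun w => kappaCoef A Q R lam a0 a2 w 0) z = 0 := by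
    intro k
    simp only [pd3, kappaCoef, Matrix.cons_val_zero]
    exact deriv_const _ _
  have h01 : pd3 0 (fun w => kappaCoef A Q R lam a0 a2 w 1) z = 0 := by
    simp only [pd3, kappaCoef, Matrix.cons_val_one, Matrix.head_cons, Matrix.cons_val_zero,
      Function.update_of_ne (by decide : (1:Fin 3) ≠ 0),
      Function.update_of_ne (by decide : (2:Fin 3) ≠ 0)]
    exact deriv_const _ _
  have h02 : pd3 0 (fun w => kappaCoef A Q R lam a0 a2 w 2) z = 0 := by
    simp only [pd3, kappaCoef, Matrix.cons_val_two, Matrix.tail_cons, Matrix.head_cons,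
      Function.update_of_ne (by decide : (1:Fin 3) ≠ 0),
      Function.update_of_ne (by decide : (2:Fin 3) ≠ 0)]
    exact deriv_const _ _
  have h12 : pd3 1 (fun w => kappaCoef A Q R lam a0 a2 w 2) z =
      lam * R (z 2) / (z 2) ^ 2 - lam * Q (z 2) / z 2
        + z 2 * (A (z 2)) ^ 2 * lam + a2 / (z 2) ^ 2 := by
    simp only [pd3, kappaCoef, Matrix.cons_val_two, Matrix.tail_cons, Matrix.head_cons,
      Function.update_self,
      Function.update_of_ne (by decide : (2:Fin 3) ≠ 1)]
    have hfun : (fun s : ℝ => lam * s * R (z 2) / (z 2) ^ 2 - lam * s * Q (z 2) / z 2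
        + z 2 * (A (z 2)) ^ 2 * (lam * s + a0) + a2 * s / (z 2) ^ 2)
        = fun s : ℝ => (lam * R (z 2) / (z 2) ^ 2 - lam * Q (z 2) / z 2
          + z 2 * (A (z 2)) ^ 2 * lam + a2 / (z 2) ^ 2) * s + z 2 * (A (z 2)) ^ 2 * a0 := by
      funext s; field_simp; ring
    rw [hfun]
    simpa using (((hasDerivAt_id (z 1)).const_mul
      (lam * R (z 2) / (z 2) ^ 2 - lam * Q (z 2) / z 2
        + z 2 * (A (z 2)) ^ 2 * lam + a2 / (z 2) ^ 2)).add_const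
          (z 2 * (A (z 2)) ^ 2 * a0)).deriv
  have h21 : pd3 2 (fun w => kappaCoef A Q R lam a0 a2 w 1) z =
      lam * R (z 2) / (z 2) ^ 2 - lam * Q (z 2) / z 2
        + z 2 * (A (z 2)) ^ 2 * lam + a2 / (z 2) ^ 2 := by
    simp only [pd3, kappaCoef, Matrix.cons_val_one, Matrix.head_cons, Matrix.cons_val_zero,
      Function.update_self,
      Function.update_of_ne (by decide : (1:Fin 3) ≠ 2)]
    have h : HasDerivAt
        (fun s : ℝ => -(lam * (z 1) ^ 2 + a0 * z 1 - lam * Q s + lam * R s / s + a2 / s))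
        (-((0 - lam * (z 2 * (A (z 2)) ^ 2))
            + (lam * Q (z 2) * z 2 - lam * R (z 2) * 1) / (z 2) ^ 2
            + (0 * z 2 - a2 * 1) / (z 2) ^ 2)) (z 2) :=
      ((((hasDerivAt_const (z 2) (lam * (z 1) ^ 2 + a0 * z 1)).sub
          (hQ'.const_mul lam)).add
            ((hR'.const_mul lam).div (hasDerivAt_id (z 2)) hz')).add
              ((hasDerivAt_const (z 2) a2).div (hasDerivAt_id (z 2)) hz')).neg
    rw [h.deriv]
    field_simp
    ring
  fin_cases i <;> fin_cases j
  · rfl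
  · exact h01.trans (h00 1).symm
  · exact h02.trans (h00 2).symm
  · exact (h00 1).trans h01.symm
  · rfl
  · exact h12.trans h21.symm
  · exact (h00 2).trans h02.symm
  · exact h21.trans h12.symm
  · rfl
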